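/- arXiv:1004.1511 — 7 statements merged into one kernel-verified Lean document; each statement's English description precedes it below -/
import Mathlib

section
/- The set C of all vectors in {-1,0,1}^n containing an even number of zero entries has minimum d_1-distance at least 2 and cardinality (3^n + 1)/2. -/
open Finset

/-- The `d₁`-distance: `∑ i, |x i - y i|`. -/
def d1 {n : ℕ} (x y : Fin n → ℤ) : ℕ := ∑ i, (x i - y i).natAbs

/-- `x` is a vector over the ternary alphabet `Q = {-1, 0, 1}`. -/
def isQ {n : ℕ} (x : Fin n → ℤ) : Prop := ∀ i, x i = -1 ∨ x i = 0 ∨ x i = 1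

/-- The set of words in `Q^n` with an even number of zero entries has minimum
`d₁`-distance at least `2` and cardinality `(3^n + 1)/2`. -/
theorem stmt_9 (n : ℕ)
    (C : Set (Fin n → ℤ))
    (hC : C = {x | isQ x ∧ Even (Finset.univ.filter (fun i => x i = 0)).card}) :
    (∀ x ∈ C, ∀ y ∈ C, x ≠ y → 2 ≤ d1 x y) ∧ C.ncard = (3 ^ n + 1) / 2 := by
  subst hC
  constructor
  · rintro x ⟨hx, hxe⟩ y ⟨hy, hye⟩ hxy
    have h1 : 1 ≤ d1 x y := by
      rcases Function.ne_iff.mp hxy with ⟨i, hi⟩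
      have h2 : 1 ≤ (x i - y i).natAbs :=
        Int.natAbs_pos.mpr (sub_ne_zero.mpr hi)
      calc 1 ≤ (x i - y i).natAbs := h2
        _ ≤ d1 x y := by
          rw [d1]
          exact Finset.single_le_sum (f := fun i => (x i - y i).natAbs) (fun _ _ => Nat.zero_le _) (mem_univ i)
    have heven : Even (d1 x y) := by
      have hmod : ∀ i : Fin n, (x i - y i).natAbs % 2 =
          ((if x i = 0 then 1 else 0) + (if y i = 0 then 1 else 0)) % 2 := by
        intro i
        rcases hx i with h | h | h <;> rcases hy i with h' | h' | h' <;>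
          simp [h, h']
      have hkey : d1 x y % 2 = ((univ.filter (fun i => x i = 0)).card +
          (univ.filter (fun i => y i = 0)).card) % 2 := by
        rw [d1, Finset.sum_nat_mod,
          Finset.sum_congr rfl (fun i _ => hmod i), ← Finset.sum_nat_mod,
          Finset.sum_add_distrib, ← Finset.card_filter, ← Finset.card_filter]
      rw [Nat.even_iff, hkey, ← Nat.even_iff]
      exact hxe.add hye
    rcases heven with ⟨k, hk⟩
    omega
  · set S := Fintype.piFinset (fun _ : Fin n => ({-1, 0, 1} : Finset ℤ)) with hS
    set p : (Fin n → ℤ) → Prop := fun x => Even ((univ.filter (fun i => x i = 0)).card) with hp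
    have hsetF : {x : Fin n → ℤ | isQ x ∧ p x} = ↑(S.filter p) := by
      ext x
      simp [hS, Fintype.mem_piFinset, isQ, Set.mem_setOf_eq]
    rw [hsetF, Set.ncard_coe_finset]
    have hcard : (S.filter p).card + (S.filter (fun x => ¬ p x)).card = 3 ^ n := by
      rw [Finset.card_filter_add_card_filter_not]
      simp [hS, Fintype.card_piFinset]
    have hsum1 : ∑ x ∈ S, ∏ i, (if x i = 0 then (-1 : ℤ) else 1) = 1 := by
      rw [hS, ← Finset.prod_univ_sum (fun _ : Fin n => ({-1, 0, 1} : Finset ℤ))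
        (fun _ q => if q = 0 then (-1 : ℤ) else 1)]
      simp
    have hsum2 : ∑ x ∈ S, ∏ i, (if x i = 0 then (-1 : ℤ) else 1) =
        ((S.filter p).card : ℤ) - ((S.filter (fun x => ¬ p x)).card : ℤ) := by
      have hterm : ∀ x, (∏ i, (if x i = 0 then (-1 : ℤ) else 1)) =
          if p x then 1 else -1 := by
        intro x
        rw [Finset.prod_ite, Finset.prod_const, Finset.prod_const, one_pow, mul_one]
        by_cases h : p x
        · rw [if_pos h, h.neg_one_pow]
        · rw [if_neg h, (Nat.not_even_iff_odd.mp h).neg_one_pow]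
      rw [Finset.sum_congr rfl (fun x _ => hterm x), Finset.sum_ite,
        Finset.sum_const, Finset.sum_const]
      push_cast
      ring
    rw [hsum1] at hsum2
    clear hp hS hsetF
    generalize hA : #(filter p S) = A at hcard hsum2 ⊢
    generalize hB : #(filter (fun x => ¬p x) S) = B at hcard hsum2
    clear hsum1 hA hB
    clear S p
    omega
end

section
/- T(n,d) ≤ A_2(2n, d), where A_2(2n,d) is the maximum size of a binary code of length 2n with minimum Hamming distance at least d. -/
open Finset

/-- `T n d`: the maximum size of a code in `Q^n` with minimum `d₁`-distance at least `d`. -/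
noncomputable def T (n d : ℕ) : ℕ :=
  sSup {m | ∃ C : Finset (Fin n → ℤ), (∀ x ∈ C, isQ x) ∧
    (∀ x ∈ C, ∀ y ∈ C, x ≠ y → d ≤ d1 x y) ∧ C.card = m}

/-- `A2 n e`: the maximum size of a binary code of length `n` with minimum
Hamming distance at least `e`. -/
noncomputable def A2 (n e : ℕ) : ℕ :=
  sSup {m | ∃ C : Finset (Fin n → Fin 2),
    (∀ x ∈ C, ∀ y ∈ C, x ≠ y → e ≤ hammingDist x y) ∧ C.card = m}

/-- `A3 n e`: the maximum size of a ternary code (over `Q`) of length `n` with minimum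
Hamming distance at least `e`. -/
noncomputable def A3 (n e : ℕ) : ℕ :=
  sSup {m | ∃ C : Finset (Fin n → ℤ), (∀ x ∈ C, isQ x) ∧
    (∀ x ∈ C, ∀ y ∈ C, x ≠ y → e ≤ hammingDist x y) ∧ C.card = m}

def bit2 (a : ℤ) (j : Fin 2) : Fin 2 :=
  if j = 0 then (if a = 1 then 1 else 0) else (if a = -1 then 1 else 0)

lemma bit2_inj {a b : ℤ} (ha : a = -1 ∨ a = 0 ∨ a = 1) (hb : b = -1 ∨ b = 0 ∨ b = 1)
    (h : ∀ j, bit2 a j = bit2 b j) : a = b := by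
  rcases ha with ha|ha|ha <;> rcases hb with hb|hb|hb <;> subst ha <;> subst hb <;>
    first | rfl | (exfalso; revert h; decide)

lemma bit2_sum {a b : ℤ} (ha : a = -1 ∨ a = 0 ∨ a = 1) (hb : b = -1 ∨ b = 0 ∨ b = 1) :
    (∑ j : Fin 2, if bit2 a j ≠ bit2 b j then 1 else 0) = (a - b).natAbs := by
  rcases ha with ha|ha|ha <;> rcases hb with hb|hb|hb <;> subst ha <;> subst hb <;> decide

/-- The componentwise map `φ` from `Q^n` to binary strings of length `2n`. -/
def phi {n : ℕ} (x : Fin n → ℤ) (i : Fin (2 * n)) : Fin 2 :=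
  bit2 (x (finProdFinEquiv.symm i).2) (finProdFinEquiv.symm i).1

lemma phi_apply {n : ℕ} (x : Fin n → ℤ) (p : Fin 2 × Fin n) :
    phi x (finProdFinEquiv p) = bit2 (x p.2) p.1 := by
  simp [phi]

lemma phi_isometry {n : ℕ} (x y : Fin n → ℤ) (hx : isQ x) (hy : isQ y) :
    hammingDist (phi x) (phi y) = d1 x y := by
  classical
  have h1 : hammingDist (phi x) (phi y)
      = ∑ i : Fin (2 * n), if phi x i ≠ phi y i then 1 else 0 := by
    rw [hammingDist, Finset.card_filter]
  rw [h1, ← Equiv.sum_comp (finProdFinEquiv : Fin 2 × Fin n ≃ Fin (2 * n))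
    (fun i => if phi x i ≠ phi y i then 1 else 0)]
  simp only [phi_apply]
  rw [Fintype.sum_prod_type, Finset.sum_comm]
  unfold d1
  exact Finset.sum_congr rfl fun i _ => bit2_sum (hx i) (hy i)

lemma phi_inj {n : ℕ} {x y : Fin n → ℤ} (hx : isQ x) (hy : isQ y)
    (h : phi x = phi y) : x = y := by
  funext i
  refine bit2_inj (hx i) (hy i) fun j => ?_
  have := congrFun h (finProdFinEquiv (j, i))
  rwa [phi_apply, phi_apply] at this

/-- `T(n,d) ≤ A₂(2n,d)`. -/
theorem stmt_12 (n d : ℕ) : T n d ≤ A2 (2 * n) d := by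
  classical
  apply csSup_le_csSup
  · refine ⟨Fintype.card (Fin (2 * n) → Fin 2), ?_⟩
    rintro m ⟨C, -, rfl⟩
    exact Finset.card_le_univ C
  · exact ⟨0, ∅, by simp⟩
  · rintro m ⟨C, hQ, hd, rfl⟩
    refine ⟨C.image phi, ?_, ?_⟩
    · rintro x' hx' y' hy' hne
      obtain ⟨x, hx, rfl⟩ := Finset.mem_image.1 hx'
      obtain ⟨y, hy, rfl⟩ := Finset.mem_image.1 hy'
      have hxy : x ≠ y := fun h => hne (by rw [h])
      rw [phi_isometry x y (hQ x hx) (hQ y hy)]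
      exact hd x hx y hy hxy
    · exact Finset.card_image_of_injOn fun x hx y hy h => phi_inj (hQ x hx) (hQ y hy) h
end

section
/- (3/4)^n · A_2(2n,d) ≤ T(n,d): for every binary code C ⊆ {0,1}^{2n} of minimum Hamming distance at least d, there exists x ∈ {0,1}^{2n} such that |(x + C) ∩ A^n| ≥ |C|·3^n/2^{2n}, where A = {(0,1),(0,0),(1,0)}; consequently there is a code in {-1,0,1}^n of minimum d_1-distance at least d and size at least (3/4)^n·|C|. -/
open Finset

def dec (p : Fin 2 × Fin 2) : ℤ := (p.1 : ℤ) - (p.2 : ℤ)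

lemma dec_mem (p : Fin 2 × Fin 2) : dec p = -1 ∨ dec p = 0 ∨ dec p = 1 := by
  revert p; decide

lemma dec_dist (a b : Fin 2 × Fin 2) (ha : a ≠ (1,1)) (hb : b ≠ (1,1)) :
    (dec a - dec b).natAbs =
      (if a.1 ≠ b.1 then 1 else 0) + (if a.2 ≠ b.2 then 1 else 0) := by
  revert ha hb; revert a b; decide

lemma hamming_eq_sum {n : ℕ} (f g : Fin n × Fin 2 → Fin 2) :
    hammingDist f g = ∑ i : Fin n,
      ((if f (i,0) ≠ g (i,0) then 1 else 0) + (if f (i,1) ≠ g (i,1) then 1 else 0)) := by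
  unfold hammingDist
  rw [Finset.card_filter, Fintype.sum_prod_type]
  exact Finset.sum_congr rfl fun i _ => by rw [Fin.sum_univ_two]

lemma count_good {n : ℕ} (c : Fin n × Fin 2 → Fin 2) :
    (univ.filter fun x : Fin n × Fin 2 → Fin 2 =>
      ∀ i : Fin n, ¬(x (i,0) + c (i,0) = 1 ∧ x (i,1) + c (i,1) = 1)).card = 3 ^ n := by
  classical
  rw [← Fintype.card_subtype]
  let Φ : (Fin n × Fin 2 → Fin 2) ≃ (Fin n → Fin 2 × Fin 2) :=
    (Equiv.addRight c).trans ((Equiv.curry (Fin n) (Fin 2) (Fin 2)).trans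
      (Equiv.piCongrRight fun _ => piFinTwoEquiv fun _ => Fin 2))
  have hΦ : ∀ x i, Φ x i = (x (i,0) + c (i,0), x (i,1) + c (i,1)) := fun x i => rfl
  have e1 : {x : Fin n × Fin 2 → Fin 2 //
      ∀ i : Fin n, ¬(x (i,0) + c (i,0) = 1 ∧ x (i,1) + c (i,1) = 1)} ≃
      {g : Fin n → Fin 2 × Fin 2 // ∀ i, g i ≠ (1,1)} := by
    refine Equiv.subtypeEquiv Φ fun x => ?_
    refine forall_congr' fun i => ?_
    rw [hΦ]
    simp [Prod.ext_iff]
  rw [Fintype.card_congr (e1.trans (Equiv.subtypePiEquivPi (p := fun _ b => b ≠ ((1:Fin 2),(1:Fin 2))))), Fintype.card_pi]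
  have : Fintype.card {p : Fin 2 × Fin 2 // p ≠ (1,1)} = 3 := by decide
  simp [this]

lemma avg {n : ℕ} (C : Finset (Fin n × Fin 2 → Fin 2)) :
    ∃ x : Fin n × Fin 2 → Fin 2,
      3 ^ n * C.card ≤ 4 ^ n * (C.filter
        (fun c => ∀ i : Fin n, ¬(x (i, 0) + c (i, 0) = 1 ∧ x (i, 1) + c (i, 1) = 1))).card := by
  classical
  have hsum : ∑ x : Fin n × Fin 2 → Fin 2, (C.filter
      (fun c => ∀ i : Fin n, ¬(x (i, 0) + c (i, 0) = 1 ∧ x (i, 1) + c (i, 1) = 1))).card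
      = C.card * 3 ^ n := by
    calc ∑ x : Fin n × Fin 2 → Fin 2, (C.filter
        (fun c => ∀ i : Fin n, ¬(x (i, 0) + c (i, 0) = 1 ∧ x (i, 1) + c (i, 1) = 1))).card
        = ∑ c ∈ C, (univ.filter fun x : Fin n × Fin 2 → Fin 2 =>
            ∀ i : Fin n, ¬(x (i,0) + c (i,0) = 1 ∧ x (i,1) + c (i,1) = 1)).card := by
          simp_rw [Finset.card_filter]
          exact Finset.sum_comm
      _ = ∑ _c ∈ C, 3 ^ n := Finset.sum_congr rfl fun c _ => count_good c
      _ = C.card * 3 ^ n := by rw [Finset.sum_const, smul_eq_mul]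
  have hcard : Fintype.card (Fin n × Fin 2 → Fin 2) = 4 ^ n := by
    rw [Fintype.card_fun, Fintype.card_prod, Fintype.card_fin, Fintype.card_fin,
      mul_comm n 2, pow_mul]
    norm_num
  have hle : ∑ _x : Fin n × Fin 2 → Fin 2, 3 ^ n * C.card ≤
      ∑ x : Fin n × Fin 2 → Fin 2, 4 ^ n * (C.filter
        (fun c => ∀ i : Fin n, ¬(x (i, 0) + c (i, 0) = 1 ∧ x (i, 1) + c (i, 1) = 1))).card := by
    rw [Finset.sum_const, ← Finset.mul_sum, hsum, Finset.card_univ, hcard, smul_eq_mul]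
    ring_nf
    exact le_refl _
  obtain ⟨x, -, hx⟩ := Finset.exists_le_of_sum_le Finset.univ_nonempty hle
  exact ⟨x, hx⟩

lemma mkD {n d : ℕ} (C : Finset (Fin n × Fin 2 → Fin 2))
    (hC : ∀ x ∈ C, ∀ y ∈ C, x ≠ y → d ≤ hammingDist x y)
    (x : Fin n × Fin 2 → Fin 2) :
    ∃ D : Finset (Fin n → ℤ), (∀ z ∈ D, isQ z) ∧
      (∀ z ∈ D, ∀ w ∈ D, z ≠ w → d ≤ d1 z w) ∧
      (C.filter (fun c => ∀ i : Fin n,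
        ¬(x (i, 0) + c (i, 0) = 1 ∧ x (i, 1) + c (i, 1) = 1))).card = D.card := by
  classical
  set P : (Fin n × Fin 2 → Fin 2) → Prop := fun c => ∀ i : Fin n,
    ¬(x (i,0) + c (i,0) = 1 ∧ x (i,1) + c (i,1) = 1) with hP
  set ψ : (Fin n × Fin 2 → Fin 2) → (Fin n → ℤ) :=
    fun c i => dec (x (i,0) + c (i,0), x (i,1) + c (i,1)) with hψ
  have key : ∀ c ∈ C.filter P, ∀ c' ∈ C.filter P, d1 (ψ c) (ψ c') = hammingDist c c' := by
    intro c hc c' hc'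
    rw [Finset.mem_filter] at hc hc'
    rw [hamming_eq_sum]
    unfold d1
    refine Finset.sum_congr rfl fun i _ => ?_
    rw [hψ]
    rw [dec_dist _ _ (by simpa [Prod.ext_iff] using hc.2 i) (by simpa [Prod.ext_iff] using hc'.2 i)]
    simp [add_right_inj]
  have inj : Set.InjOn ψ (C.filter P) := by
    intro c hc c' hc' h
    by_contra hne
    have h1 := key c hc c' hc'
    rw [h] at h1
    have h2 : d1 (ψ c') (ψ c') = 0 := by simp [d1]
    rw [h2] at h1
    exact hne (hammingDist_eq_zero.mp h1.symm)
  refine ⟨(C.filter P).image ψ, ?_, ?_, (Finset.card_image_of_injOn inj).symm⟩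
  · intro z hz
    obtain ⟨c, -, rfl⟩ := Finset.mem_image.mp hz
    intro i
    exact dec_mem _
  · intro z hz w hw hzw
    obtain ⟨c, hc, rfl⟩ := Finset.mem_image.mp hz
    obtain ⟨c', hc', rfl⟩ := Finset.mem_image.mp hw
    have hcc : c ≠ c' := fun h => hzw (by rw [h])
    rw [key c hc c' hc']
    exact hC c (Finset.mem_of_mem_filter c hc) c' (Finset.mem_of_mem_filter c' hc') hcc


def q3 (z : ℤ) : Fin 3 := ⟨(z + 1).toNat % 3, Nat.mod_lt _ (by norm_num)⟩

lemma q3_inj {a b : ℤ} (ha : a = -1 ∨ a = 0 ∨ a = 1) (hb : b = -1 ∨ b = 0 ∨ b = 1)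
    (h : q3 a = q3 b) : a = b := by
  have h' : (a + 1).toNat % 3 = (b + 1).toNat % 3 := congrArg Fin.val h
  rcases ha with rfl|rfl|rfl <;> rcases hb with rfl|rfl|rfl <;> omega

lemma card_le_Q {n : ℕ} (E : Finset (Fin n → ℤ)) (h : ∀ z ∈ E, isQ z) :
    E.card ≤ 3 ^ n := by
  classical
  have inj : Set.InjOn (fun z : Fin n → ℤ => fun i => q3 (z i)) E := by
    intro z hz w hw hgw
    funext i
    exact q3_inj (h z hz i) (h w hw i) (congrFun hgw i)
  calc E.card = (E.image (fun z : Fin n → ℤ => fun i => q3 (z i))).card :=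
        (Finset.card_image_of_injOn inj).symm
    _ ≤ Fintype.card (Fin n → Fin 3) := Finset.card_le_univ _
    _ = 3 ^ n := by simp [Fintype.card_fun]

lemma hamming_comp {n : ℕ} (σ : Fin n × Fin 2 ≃ Fin (2 * n)) (f g : Fin (2 * n) → Fin 2) :
    hammingDist (f ∘ σ) (g ∘ σ) = hammingDist f g := by
  unfold hammingDist
  exact Finset.card_equiv σ (by simp)

/-- Lower bound `(3/4)^n · A₂(2n,d) ≤ T(n,d)`, together with the translation argument:
for every binary code `C` of length `2n` (indexed by `Fin n × Fin 2`) with minimum Hamming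
distance at least `d`, some translate `x + C` meets `Aⁿ` (where `A = {(0,1),(0,0),(1,0)}`,
i.e. no position `i` carries the pair `(1,1)`) in at least `|C|·3^n/2^(2n)` words, and
consequently there is a code in `Q^n` of minimum `d₁`-distance at least `d` and size at
least `(3/4)^n·|C|`. -/
theorem stmt_13 (n d : ℕ) :
    3 ^ n * A2 (2 * n) d ≤ 4 ^ n * T n d ∧
    ∀ C : Finset (Fin n × Fin 2 → Fin 2),
      (∀ x ∈ C, ∀ y ∈ C, x ≠ y → d ≤ hammingDist x y) →
      (∃ x : Fin n × Fin 2 → Fin 2,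
        3 ^ n * C.card ≤
          4 ^ n * (C.filter
            (fun c => ∀ i : Fin n, ¬(x (i, 0) + c (i, 0) = 1 ∧ x (i, 1) + c (i, 1) = 1))).card) ∧
      ∃ D : Finset (Fin n → ℤ), (∀ x ∈ D, isQ x) ∧
        (∀ x ∈ D, ∀ y ∈ D, x ≠ y → d ≤ d1 x y) ∧
        3 ^ n * C.card ≤ 4 ^ n * D.card := by
  classical
  have part2 : ∀ C : Finset (Fin n × Fin 2 → Fin 2),
      (∀ x ∈ C, ∀ y ∈ C, x ≠ y → d ≤ hammingDist x y) →
      (∃ x : Fin n × Fin 2 → Fin 2,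
        3 ^ n * C.card ≤
          4 ^ n * (C.filter
            (fun c => ∀ i : Fin n, ¬(x (i, 0) + c (i, 0) = 1 ∧ x (i, 1) + c (i, 1) = 1))).card) ∧
      ∃ D : Finset (Fin n → ℤ), (∀ x ∈ D, isQ x) ∧
        (∀ x ∈ D, ∀ y ∈ D, x ≠ y → d ≤ d1 x y) ∧
        3 ^ n * C.card ≤ 4 ^ n * D.card := by
    intro C hC
    obtain ⟨x, hx⟩ := avg C
    obtain ⟨D, hQ, hdist, hcard⟩ := mkD C hC x
    exact ⟨⟨x, hx⟩, D, hQ, hdist, hcard ▸ hx⟩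
  refine ⟨?_, part2⟩
  set S2 : Set ℕ := {m | ∃ C : Finset (Fin (2 * n) → Fin 2),
    (∀ x ∈ C, ∀ y ∈ C, x ≠ y → d ≤ hammingDist x y) ∧ C.card = m} with hS2
  have hne : S2.Nonempty := ⟨0, ∅, by simp, by simp⟩
  have hbdd : BddAbove S2 := by
    refine ⟨Fintype.card (Fin (2 * n) → Fin 2), ?_⟩
    rintro m ⟨C, -, rfl⟩
    exact Finset.card_le_univ C
  have hmem : A2 (2 * n) d ∈ S2 := by
    rw [A2]
    exact Nat.sSup_mem hne hbdd
  obtain ⟨Cb, hCb, hcardb⟩ := hmem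
  set σ : Fin n × Fin 2 ≃ Fin (2 * n) := finProdFinEquiv.trans (finCongr (mul_comm n 2)) with hσ
  have hinj : Function.Injective (fun f : Fin (2 * n) → Fin 2 => f ∘ σ) := by
    intro f g h
    funext a
    have := congrFun h (σ.symm a)
    simpa using this
  set C : Finset (Fin n × Fin 2 → Fin 2) := Cb.image (fun f => f ∘ σ) with hCdef
  have hCcard : C.card = Cb.card := Finset.card_image_of_injective _ hinj
  have hCd : ∀ u ∈ C, ∀ v ∈ C, u ≠ v → d ≤ hammingDist u v := by
    intro u hu v hv huv
    obtain ⟨f, hf, rfl⟩ := Finset.mem_image.mp hu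
    obtain ⟨g, hg, rfl⟩ := Finset.mem_image.mp hv
    rw [hamming_comp]
    exact hCb f hf g hg (fun h => huv (by rw [h]))
  obtain ⟨-, D, hQ, hdist, hle⟩ := part2 C hCd
  have hT : D.card ≤ T n d := by
    apply le_csSup
    · refine ⟨3 ^ n, ?_⟩
      rintro m ⟨E, hE, -, rfl⟩
      exact card_le_Q E hE
    · exact ⟨D, hQ, hdist, rfl⟩
  calc 3 ^ n * A2 (2 * n) d = 3 ^ n * C.card := by rw [hCcard, hcardb]
    _ ≤ 4 ^ n * D.card := hle
    _ ≤ 4 ^ n * T n d := Nat.mul_le_mul_left _ hT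
end

section
/- Let C be a binary code of length n with minimum Hamming distance at least d, and let A_w denote the number of codewords of C of Hamming weight w. Then T(n,d) ≥ Σ_{w=0}^n A_w · A_2(w, ⌈d/2⌉). -/
open Finset

section Aux

lemma fin2 (x : Fin 2) : x = 0 ∨ x = 1 := by
  rcases x with ⟨v, hv⟩
  interval_cases v <;> simp

variable {n : ℕ}

/-- The support of a binary vector. -/
def sc (c : Fin n → Fin 2) : Finset (Fin n) := {i | c i ≠ 0}

lemma mem_sc {c : Fin n → Fin 2} {i : Fin n} : i ∈ sc c ↔ c i ≠ 0 := by
  simp [sc]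

/-- Order iso between `Fin (hammingNorm c)` and the support of `c`. -/
noncomputable def isoc (c : Fin n → Fin 2) : Fin (hammingNorm c) ≃o {x // x ∈ sc c} :=
  (sc c).orderIsoOfFin rfl

/-- The construction: replace the support of `c` by `±1` according to `b`. -/
noncomputable def g (c : Fin n → Fin 2) (b : Fin (hammingNorm c) → Fin 2) (i : Fin n) : ℤ :=
  if h : c i ≠ 0 then (if b ((isoc c).symm ⟨i, mem_sc.mpr h⟩) = 1 then 1 else -1) else 0

lemma g_apply_iso (c : Fin n → Fin 2) (b : Fin (hammingNorm c) → Fin 2)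
    (j : Fin (hammingNorm c)) :
    g c b ((isoc c j : Fin n)) = if b j = 1 then 1 else -1 := by
  have h : c ↑(isoc c j) ≠ 0 := mem_sc.mp (isoc c j).2
  have key : ((isoc c).symm ⟨↑(isoc c j), mem_sc.mpr h⟩) = j := by
    rw [show (⟨↑(isoc c j), mem_sc.mpr h⟩ : {x // x ∈ sc c}) = isoc c j from Subtype.ext rfl]
    exact (isoc c).symm_apply_apply j
  simp only [g, dif_pos h, key]

lemma g_eq_zero {c : Fin n → Fin 2} {b : Fin (hammingNorm c) → Fin 2} {i : Fin n} :
    g c b i = 0 ↔ c i = 0 := by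
  by_cases h : c i = 0
  · simp [g, h]
  · simp only [g, dif_pos h]
    split_ifs <;> simp [h]

lemma g_isQ (c : Fin n → Fin 2) (b : Fin (hammingNorm c) → Fin 2) : isQ (g c b) := by
  intro i
  unfold g
  split_ifs <;> simp

lemma g_injective (c : Fin n → Fin 2) : Function.Injective (g c) := by
  intro b b' h
  funext j
  have := congrFun h ((isoc c j : Fin n))
  rw [g_apply_iso, g_apply_iso] at this
  rcases fin2 (b j) with h1 | h1 <;> rcases fin2 (b' j) with h2 | h2 <;>
    simp_all

lemma d1_g_same (c : Fin n → Fin 2) (b b' : Fin (hammingNorm c) → Fin 2) :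
    2 * hammingDist b b' ≤ d1 (g c b) (g c b') := by
  classical
  set s : Finset (Fin n) :=
    ({j | b j ≠ b' j} : Finset (Fin (hammingNorm c))).image (fun j => ((isoc c j : Fin n)))
    with hs
  have hinj : Function.Injective (fun j => ((isoc c j : Fin n))) := by
    intro a a' h
    exact (isoc c).injective (Subtype.ext h)
  have hcard : s.card = hammingDist b b' := by
    rw [hs, Finset.card_image_of_injective _ hinj]
    rfl
  have hterm : ∀ i ∈ s, (g c b i - g c b' i).natAbs = 2 := by
    intro i hi
    rw [hs, Finset.mem_image] at hi
    obtain ⟨j, hj, rfl⟩ := hi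
    simp only [Finset.mem_filter, Finset.mem_univ, true_and] at hj
    rw [g_apply_iso, g_apply_iso]
    rcases fin2 (b j) with h1 | h1 <;> rcases fin2 (b' j) with h2 | h2 <;>
      simp_all
  calc 2 * hammingDist b b' = ∑ _i ∈ s, 2 := by
        rw [Finset.sum_const, hcard, smul_eq_mul, mul_comm]
    _ = ∑ i ∈ s, (g c b i - g c b' i).natAbs := (Finset.sum_congr rfl hterm).symm
    _ ≤ ∑ i, (g c b i - g c b' i).natAbs :=
        Finset.sum_le_sum_of_subset (Finset.subset_univ s)
    _ = d1 (g c b) (g c b') := rfl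

lemma d1_g_diff (c c' : Fin n → Fin 2) (b : Fin (hammingNorm c) → Fin 2)
    (b' : Fin (hammingNorm c') → Fin 2) :
    hammingDist c c' ≤ d1 (g c b) (g c' b') := by
  classical
  have hterm : ∀ i ∈ ({i | c i ≠ c' i} : Finset (Fin n)),
      1 ≤ (g c b i - g c' b' i).natAbs := by
    intro i hi
    simp only [Finset.mem_filter, Finset.mem_univ, true_and] at hi
    rw [Nat.one_le_iff_ne_zero]
    intro h0
    have heq : g c b i = g c' b' i := by
      have := Int.natAbs_eq_zero.mp h0
      omega
    apply hi
    rcases fin2 (c i) with h1 | h1 <;> rcases fin2 (c' i) with h2 | h2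
    · rw [h1, h2]
    · have hz : g c' b' i = 0 := heq ▸ g_eq_zero.mpr h1
      rw [g_eq_zero.mp hz] at h2
      exact absurd h2 (by decide)
    · have hz : g c b i = 0 := heq.symm ▸ g_eq_zero.mpr h2
      rw [g_eq_zero.mp hz] at h1
      exact absurd h1 (by decide)
    · rw [h1, h2]
  calc hammingDist c c' = ∑ _i ∈ ({i | c i ≠ c' i} : Finset (Fin n)), 1 := by
        rw [Finset.sum_const, smul_eq_mul, mul_one]; rfl
    _ ≤ ∑ i ∈ ({i | c i ≠ c' i} : Finset (Fin n)), (g c b i - g c' b' i).natAbs :=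
        Finset.sum_le_sum hterm
    _ ≤ ∑ i, (g c b i - g c' b' i).natAbs :=
        Finset.sum_le_sum_of_subset (Finset.subset_univ _)
    _ = d1 (g c b) (g c' b') := rfl

lemma g_supp_eq {c c' : Fin n → Fin 2} {b : Fin (hammingNorm c) → Fin 2}
    {b' : Fin (hammingNorm c') → Fin 2} (h : g c b = g c' b') : c = c' := by
  funext i
  have hz : c i = 0 ↔ c' i = 0 := by
    rw [← g_eq_zero (b := b), ← g_eq_zero (b := b'), h]
  rcases fin2 (c i) with h1 | h1 <;> rcases fin2 (c' i) with h2 | h2 <;> simp_all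

end Aux

/-- If `C` is a binary code of length `n` with minimum Hamming distance at least `d`
and `A_w` codewords of Hamming weight `w`, then `T(n,d) ≥ ∑_w A_w · A₂(w,⌈d/2⌉)`. -/
theorem stmt_14 (n d : ℕ) (C : Finset (Fin n → Fin 2))
    (hC : ∀ x ∈ C, ∀ y ∈ C, x ≠ y → d ≤ hammingDist x y) :
    ∑ w ∈ Finset.range (n + 1),
      (C.filter (fun c => hammingNorm c = w)).card * A2 w ((d + 1) / 2) ≤ T n d := by
  classical
  set e := (d + 1) / 2 with he
  -- choose optimal binary codes of each length
  have hDex : ∀ w : ℕ, ∃ D : Finset (Fin w → Fin 2),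
      (∀ x ∈ D, ∀ y ∈ D, x ≠ y → e ≤ hammingDist x y) ∧ D.card = A2 w e := by
    intro w
    have h1 : ({m | ∃ C : Finset (Fin w → Fin 2),
        (∀ x ∈ C, ∀ y ∈ C, x ≠ y → e ≤ hammingDist x y) ∧ C.card = m}).Nonempty :=
      ⟨0, ∅, by simp⟩
    have h2 : BddAbove {m | ∃ C : Finset (Fin w → Fin 2),
        (∀ x ∈ C, ∀ y ∈ C, x ≠ y → e ≤ hammingDist x y) ∧ C.card = m} := by
      refine ⟨Fintype.card (Fin w → Fin 2), ?_⟩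
      rintro m ⟨D, -, rfl⟩
      exact Finset.card_le_univ D
    obtain ⟨D, hD1, hD2⟩ := Nat.sSup_mem h1 h2
    exact ⟨D, hD1, hD2⟩
  choose D hDdist hDcard using hDex
  -- the big ternary code
  set Code : Finset (Fin n → ℤ) :=
    C.biUnion (fun c => (D (hammingNorm c)).image (g c)) with hCode
  have hmem : ∀ x ∈ Code, ∃ c ∈ C, ∃ b ∈ D (hammingNorm c), g c b = x := by
    intro x hx
    rw [hCode, Finset.mem_biUnion] at hx
    obtain ⟨c, hc, hx⟩ := hx
    rw [Finset.mem_image] at hx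
    obtain ⟨b, hb, rfl⟩ := hx
    exact ⟨c, hc, b, hb, rfl⟩
  -- isQ
  have hQ : ∀ x ∈ Code, isQ x := by
    intro x hx
    obtain ⟨c, _, b, _, rfl⟩ := hmem x hx
    exact g_isQ c b
  -- minimum distance
  have hdist : ∀ x ∈ Code, ∀ y ∈ Code, x ≠ y → d ≤ d1 x y := by
    intro x hx y hy hxy
    obtain ⟨c, hc, b, hb, rfl⟩ := hmem x hx
    obtain ⟨c', hc', b', hb', rfl⟩ := hmem y hy
    by_cases hcc : c = c'
    · subst hcc
      have hbb : b ≠ b' := fun h => hxy (by rw [h])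
      have h1 : e ≤ hammingDist b b' := hDdist _ b hb b' hb' hbb
      have h2 := d1_g_same c b b'
      omega
    · have h1 : d ≤ hammingDist c c' := hC c hc c' hc' hcc
      have h2 := d1_g_diff c c' b b'
      omega
  -- cardinality
  have hdisj : ∀ c ∈ C, ∀ c' ∈ C, c ≠ c' →
      Disjoint ((D (hammingNorm c)).image (g c)) ((D (hammingNorm c')).image (g c')) := by
    intro c _ c' _ hcc
    rw [Finset.disjoint_left]
    rintro x hx hx'
    rw [Finset.mem_image] at hx hx'
    obtain ⟨b, _, rfl⟩ := hx
    obtain ⟨b', _, hb'⟩ := hx'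
    exact hcc (g_supp_eq hb'.symm)
  have hcard : Code.card = ∑ w ∈ Finset.range (n + 1),
      (C.filter (fun c => hammingNorm c = w)).card * A2 w e := by
    rw [hCode, Finset.card_biUnion hdisj]
    have step1 : ∀ c ∈ C, ((D (hammingNorm c)).image (g c)).card = A2 (hammingNorm c) e := by
      intro c _
      rw [Finset.card_image_of_injective _ (g_injective c), hDcard]
    rw [Finset.sum_congr rfl step1]
    have hmaps : ∀ c ∈ C, hammingNorm c ∈ Finset.range (n + 1) := by
      intro c _
      rw [Finset.mem_range, Nat.lt_succ_iff]
      calc hammingNorm c ≤ Fintype.card (Fin n) := Finset.card_le_univ _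
        _ = n := Fintype.card_fin n
    rw [← Finset.sum_fiberwise_of_maps_to hmaps (fun c => A2 (hammingNorm c) e)]
    refine Finset.sum_congr rfl fun w _ => ?_
    rw [Finset.sum_congr rfl (fun c hc => by
      rw [(Finset.mem_filter.mp hc).2]), Finset.sum_const, smul_eq_mul]
  -- conclude
  have hbdd : BddAbove {m | ∃ C : Finset (Fin n → ℤ), (∀ x ∈ C, isQ x) ∧
      (∀ x ∈ C, ∀ y ∈ C, x ≠ y → d ≤ d1 x y) ∧ C.card = m} := by
    refine ⟨(Fintype.piFinset fun _ : Fin n => ({-1, 0, 1} : Finset ℤ)).card, ?_⟩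
    rintro m ⟨C', hC'Q, -, rfl⟩
    apply Finset.card_le_card
    intro x hx
    rw [Fintype.mem_piFinset]
    intro i
    rcases hC'Q x hx i with h | h | h <;> simp [h]
  have hmemT : (∑ w ∈ Finset.range (n + 1),
      (C.filter (fun c => hammingNorm c = w)).card * A2 w e) ∈
      {m | ∃ C : Finset (Fin n → ℤ), (∀ x ∈ C, isQ x) ∧
      (∀ x ∈ C, ∀ y ∈ C, x ≠ y → d ≤ d1 x y) ∧ C.card = m} :=
    ⟨Code, hQ, hdist, hcard⟩
  exact le_csSup hbdd hmemT
end

section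
/- Plotkin bound for d_1-distance: if C ⊆ {-1,0,1}^n is a code with minimum d_1-distance at least d, d > n, then |C| ≤ d/(d−n). -/
open Finset

lemma natAbs_sub_le_q (a b : ℤ) (ha : a = -1 ∨ a = 0 ∨ a = 1)
    (hb : b = -1 ∨ b = 0 ∨ b = 1) : ((a - b).natAbs : ℤ) ≤ 1 - a * b := by
  rcases ha with h|h|h <;> rcases hb with h'|h'|h' <;> subst h <;> subst h' <;> decide

lemma d1_le_sub {n : ℕ} (x y : Fin n → ℤ) (hx : isQ x) (hy : isQ y) :
    (d1 x y : ℤ) ≤ (n : ℤ) - ∑ i, x i * y i := by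
  have h : (d1 x y : ℤ) = ∑ i, ((x i - y i).natAbs : ℤ) := by
    simp [d1]
  rw [h]
  calc ∑ i, ((x i - y i).natAbs : ℤ) ≤ ∑ i : Fin n, (1 - x i * y i) :=
        Finset.sum_le_sum fun i _ => natAbs_sub_le_q _ _ (hx i) (hy i)
    _ = (n : ℤ) - ∑ i, x i * y i := by
        rw [Finset.sum_sub_distrib]; simp

/-- Plotkin bound for the `d₁`-distance: if `d > n` then any code in `Q^n` with minimum
`d₁`-distance at least `d` has at most `d/(d-n)` codewords. -/
theorem stmt_15 (n d : ℕ) (hnd : n < d) (C : Finset (Fin n → ℤ))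
    (hQ : ∀ x ∈ C, isQ x)
    (hd : ∀ x ∈ C, ∀ y ∈ C, x ≠ y → d ≤ d1 x y) :
    (C.card : ℚ) ≤ (d : ℚ) / ((d : ℚ) - (n : ℚ)) := by
  have hdn : (0:ℚ) < (d:ℚ) - (n:ℚ) := by
    have := hnd; push_cast; linarith [(by exact_mod_cast hnd : (n:ℚ) < d)]
  rcases Nat.eq_zero_or_pos C.card with h0 | hpos
  · rw [h0]
    push_cast
    positivity
  set M : ℕ := C.card with hM
  -- lower bound on the double sum
  have low : (d:ℤ) * M * ((M:ℤ) - 1) ≤ ∑ x ∈ C, ∑ y ∈ C, (d1 x y : ℤ) := by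
    have h1 : ∀ x ∈ C, ((M:ℤ) - 1) * d ≤ ∑ y ∈ C, (d1 x y : ℤ) := by
      intro x hx
      have e1 : ((M:ℤ) - 1) * d = ∑ y ∈ C.erase x, (d:ℤ) := by
        rw [Finset.sum_const, Finset.card_erase_of_mem hx, nsmul_eq_mul,
          Nat.cast_sub hpos]
        push_cast; ring
      rw [e1]
      calc ∑ y ∈ C.erase x, (d:ℤ) ≤ ∑ y ∈ C.erase x, (d1 x y : ℤ) :=
            Finset.sum_le_sum fun y hy => by
              exact_mod_cast hd x hx y (Finset.mem_of_mem_erase hy)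
                (Ne.symm (Finset.ne_of_mem_erase hy))
        _ ≤ ∑ y ∈ C, (d1 x y : ℤ) :=
            Finset.sum_le_sum_of_subset_of_nonneg (Finset.erase_subset _ _)
              (fun y _ _ => by positivity)
    calc (d:ℤ) * M * ((M:ℤ) - 1) = ∑ _x ∈ C, ((M:ℤ) - 1) * d := by
          rw [Finset.sum_const, nsmul_eq_mul]; ring
      _ ≤ _ := Finset.sum_le_sum h1
  -- upper bound on the double sum
  have inner_nonneg : (0:ℤ) ≤ ∑ x ∈ C, ∑ y ∈ C, ∑ i, x i * y i := by
    have e : ∑ x ∈ C, ∑ y ∈ C, ∑ i, x i * y i = ∑ i, (∑ x ∈ C, x i) ^ 2 := by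
      have : ∀ x ∈ C, ∑ y ∈ C, ∑ i, x i * y i = ∑ i, x i * ∑ y ∈ C, y i := by
        intro x _
        rw [Finset.sum_comm]
        exact Finset.sum_congr rfl fun i _ => (Finset.mul_sum _ _ _).symm
      rw [Finset.sum_congr rfl this, Finset.sum_comm]
      refine Finset.sum_congr rfl fun i _ => ?_
      rw [← Finset.sum_mul, sq]
    rw [e]
    positivity
  have high : ∑ x ∈ C, ∑ y ∈ C, (d1 x y : ℤ) ≤ (n:ℤ) * M * M := by
    calc ∑ x ∈ C, ∑ y ∈ C, (d1 x y : ℤ)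
        ≤ ∑ x ∈ C, ∑ y ∈ C, ((n:ℤ) - ∑ i, x i * y i) :=
          Finset.sum_le_sum fun x hx => Finset.sum_le_sum fun y hy =>
            d1_le_sub x y (hQ x hx) (hQ y hy)
      _ = (n:ℤ) * M * M - ∑ x ∈ C, ∑ y ∈ C, ∑ i, x i * y i := by
          rw [Finset.sum_congr rfl fun x (_ : x ∈ C) => Finset.sum_sub_distrib _ _]
          rw [Finset.sum_sub_distrib]
          simp [mul_comm, mul_assoc, hM]
      _ ≤ (n:ℤ) * M * M := by linarith
  have key : (d:ℤ) * M * ((M:ℤ) - 1) ≤ (n:ℤ) * M * M := le_trans low high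
  have hMpos : (0:ℤ) < (M:ℤ) := by exact_mod_cast hpos
  have hdnZ : (0:ℤ) < (d:ℤ) - (n:ℤ) := by
    have : (n:ℤ) < (d:ℤ) := by exact_mod_cast hnd
    linarith
  have final : (M:ℤ) * ((d:ℤ) - (n:ℤ)) ≤ (d:ℤ) := by nlinarith
  rw [le_div_iff₀ hdn]
  exact_mod_cast final
end

section
/- If C ⊆ {-1,0,1}^n has minimum d_1-distance at least d with d > n and |C| = d/(d−n) (i.e., the Plotkin bound is attained), then C ⊆ {-1,1}^n. -/
open Finset

lemma natAbs_formula (q r : ℤ) (hq : q = -1 ∨ q = 0 ∨ q = 1)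
    (hr : r = -1 ∨ r = 0 ∨ r = 1) :
    ((q - r).natAbs : ℤ) = q^2 + r^2 - q*r - q^2*r^2 := by
  rcases hq with h|h|h <;> rcases hr with h'|h'|h' <;> subst h <;> subst h' <;> decide

/-- A code attaining the Plotkin bound `d/(d-n)` for the `d₁`-distance is a code
over `{-1,1}^n`. -/
theorem stmt_16 (n d : ℕ) (hnd : n < d) (C : Finset (Fin n → ℤ))
    (hQ : ∀ x ∈ C, isQ x)
    (hd : ∀ x ∈ C, ∀ y ∈ C, x ≠ y → d ≤ d1 x y)
    (heq : (C.card : ℚ) = (d : ℚ) / ((d : ℚ) - (n : ℚ))) :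
    ∀ x ∈ C, ∀ i, x i = -1 ∨ x i = 1 := by
  by_contra hcon
  push_neg at hcon
  obtain ⟨x₀, hx₀, i₀, hne1, hne2⟩ := hcon
  have hx0 : x₀ i₀ = 0 := by rcases hQ x₀ hx₀ i₀ with h|h|h <;> simp_all
  set M := C.card with hM
  have hM1 : 1 ≤ M := Finset.card_pos.mpr ⟨x₀, hx₀⟩
  -- the Plotkin equality
  have hdn : (n:ℚ) < (d:ℚ) := by exact_mod_cast hnd
  have hMQ : (M:ℚ) * ((d:ℚ) - n) = d := by
    rw [heq]
    exact div_mul_cancel₀ _ (by linarith : (d:ℚ) - (n:ℚ) ≠ 0)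
  have hMZ : (M:ℤ) * d = M * n + d := by
    have : ((M:ℤ) * d : ℚ) = ((M:ℤ) * n + d : ℚ) := by push_cast; nlinarith [hMQ]
    exact_mod_cast this
  -- lower bound on the double sum
  set S : ℤ := ∑ x ∈ C, ∑ y ∈ C, (d1 x y : ℤ) with hS
  have hlow : (M:ℤ) * ((M:ℤ) - 1) * d ≤ S := by
    have hstep : ∀ x ∈ C, ((M:ℤ) - 1) * d ≤ ∑ y ∈ C, (d1 x y : ℤ) := by
      intro x hx
      have h1 : (M - 1) * d ≤ ∑ y ∈ C.erase x, d1 x y := by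
        rw [← Finset.card_erase_of_mem hx]
        exact Finset.card_nsmul_le_sum _ _ _ fun y hy =>
          hd x hx y (Finset.mem_of_mem_erase hy) (Ne.symm (Finset.ne_of_mem_erase hy))
      have h2 : ∑ y ∈ C.erase x, d1 x y ≤ ∑ y ∈ C, d1 x y :=
        Finset.sum_le_sum_of_subset (Finset.erase_subset _ _)
      have h3 : ((M - 1) * d : ℕ) ≤ ∑ y ∈ C, d1 x y := le_trans h1 h2
      have h4 : (((M - 1) * d : ℕ) : ℤ) ≤ ((∑ y ∈ C, d1 x y : ℕ) : ℤ) := by exact_mod_cast h3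
      calc ((M:ℤ) - 1) * d = (((M - 1) * d : ℕ) : ℤ) := by
            push_cast [Nat.cast_sub hM1]; ring
        _ ≤ _ := by rw [Nat.cast_sum] at h4; exact h4
    calc (M:ℤ) * ((M:ℤ) - 1) * d = ∑ _x ∈ C, ((M:ℤ) - 1) * d := by
          rw [Finset.sum_const, nsmul_eq_mul]; ring
      _ ≤ S := Finset.sum_le_sum hstep
  -- rewrite S coordinatewise
  set P : Fin n → ℤ := fun i => ∑ x ∈ C, (x i)^2 with hP
  set T : Fin n → ℤ := fun i => ∑ x ∈ C, x i with hT
  have hswap : S = ∑ i, ∑ x ∈ C, ∑ y ∈ C, ((x i - y i).natAbs : ℤ) := by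
    calc S = ∑ x ∈ C, ∑ i, ∑ y ∈ C, ((x i - y i).natAbs : ℤ) := by
          rw [hS]; simp only [d1, Nat.cast_sum]
          exact Finset.sum_congr rfl fun x _ => Finset.sum_comm
      _ = _ := Finset.sum_comm
  have hid : ∀ i, ∑ x ∈ C, ∑ y ∈ C, ((x i - y i).natAbs : ℤ)
      = 2 * M * P i - T i ^ 2 - P i ^ 2 := by
    intro i
    have h1 : ∑ x ∈ C, ∑ y ∈ C, ((x i - y i).natAbs : ℤ)
        = ∑ x ∈ C, ∑ y ∈ C, ((x i)^2 + (y i)^2 - x i * y i - (x i)^2*(y i)^2) := by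
      refine Finset.sum_congr rfl fun x hx => Finset.sum_congr rfl fun y hy => ?_
      exact natAbs_formula _ _ (hQ x hx i) (hQ y hy i)
    rw [h1]
    have h2 : ∀ x ∈ C, ∑ y ∈ C, ((x i)^2 + (y i)^2 - x i * y i - (x i)^2*(y i)^2)
        = (M:ℤ) * (x i)^2 + P i - x i * T i - (x i)^2 * P i := by
      intro x _
      rw [Finset.sum_sub_distrib, Finset.sum_sub_distrib, Finset.sum_add_distrib,
        Finset.sum_const, ← Finset.mul_sum, ← Finset.mul_sum, nsmul_eq_mul]
      try simp only [hP, hT]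
      try ring
    rw [Finset.sum_congr rfl h2]
    rw [Finset.sum_sub_distrib, Finset.sum_sub_distrib, Finset.sum_add_distrib,
      Finset.sum_const, ← Finset.sum_mul, ← Finset.sum_mul, ← Finset.mul_sum, nsmul_eq_mul]
    try simp only [hP, hT]
    try ring
  have hPle : ∀ i, P i ≤ M := by
    intro i
    have : ∀ x ∈ C, (x i)^2 ≤ 1 := by
      intro x hx; rcases hQ x hx i with h|h|h <;> rw [h] <;> norm_num
    calc P i ≤ ∑ _x ∈ C, (1:ℤ) := Finset.sum_le_sum this
      _ = M := by rw [Finset.sum_const, nsmul_eq_mul]; ring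
  have hP0 : P i₀ ≤ (M:ℤ) - 1 := by
    have : P i₀ = (x₀ i₀)^2 + ∑ x ∈ C.erase x₀, (x i₀)^2 :=
      (Finset.add_sum_erase C _ hx₀).symm
    rw [this, hx0]
    have h1 : ∀ x ∈ C.erase x₀, (x i₀)^2 ≤ 1 := by
      intro x hx
      rcases hQ x (Finset.mem_of_mem_erase hx) i₀ with h|h|h <;> rw [h] <;> norm_num
    calc (0:ℤ)^2 + ∑ x ∈ C.erase x₀, (x i₀)^2 ≤ 0 + ∑ _x ∈ C.erase x₀, (1:ℤ) := by
          exact add_le_add le_rfl (Finset.sum_le_sum h1)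
      _ = (C.erase x₀).card := by rw [Finset.sum_const, nsmul_eq_mul]; ring
      _ = (M:ℤ) - 1 := by
          rw [Finset.card_erase_of_mem hx₀, ← hM]
          push_cast [Nat.cast_sub hM1]; ring
  have hup : S ≤ ∑ i : Fin n, ((M:ℤ)^2 - if i = i₀ then 1 else 0) := by
    rw [hswap]
    refine Finset.sum_le_sum fun i _ => ?_
    rw [hid i]
    by_cases h : i = i₀
    · subst h
      norm_num
      nlinarith [sq_nonneg (T i), hP0,
        mul_nonneg (by linarith : (0:ℤ) ≤ (M:ℤ) - P i - 1)
          (by linarith : (0:ℤ) ≤ (M:ℤ) - P i + 1)]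
    · simp only [if_neg h]
      nlinarith [sq_nonneg (T i), sq_nonneg ((M:ℤ) - P i), hPle i]
  have hsum : ∑ i : Fin n, ((M:ℤ)^2 - if i = i₀ then 1 else 0)
      = (n:ℤ) * (M:ℤ)^2 - 1 := by
    rw [Finset.sum_sub_distrib, Finset.sum_const, Finset.sum_ite_eq' Finset.univ i₀]
    simp [Finset.card_univ]
  rw [hsum] at hup
  nlinarith [hlow, hup, hMZ]
end

section
/- T(d,d) ≤ 2d + 1/2 + √(2d + 1/4): any code in {-1,0,1}^d with minimum d_1-distance at least d has at most 2d + 1/2 + √(2d+1/4) codewords. -/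
open Finset

lemma sum_sub_sq {α : Type*} (S : Finset α) (f : α → ℤ) :
    ∑ x ∈ S, ∑ y ∈ S, (f x - f y)^2
      = 2 * S.card * (∑ x ∈ S, (f x)^2) - 2 * (∑ x ∈ S, f x)^2 := by
  have e1 : ∀ x, ∑ y ∈ S, (f x - f y)^2
      = S.card * (f x)^2 - 2 * f x * (∑ y ∈ S, f y) + ∑ y ∈ S, (f y)^2 := by
    intro x
    have h : ∀ y, (f x - f y)^2 = (f x)^2 - 2 * f x * f y + (f y)^2 := fun y => by ring
    simp only [h, Finset.sum_add_distrib, Finset.sum_sub_distrib, Finset.sum_const,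
      nsmul_eq_mul, ← Finset.mul_sum]
  calc ∑ x ∈ S, ∑ y ∈ S, (f x - f y)^2
      = ∑ x ∈ S, ((S.card : ℤ) * (f x)^2 - 2 * f x * (∑ y ∈ S, f y) + ∑ y ∈ S, (f y)^2) :=
        Finset.sum_congr rfl (fun x _ => e1 x)
    _ = ((S.card : ℤ) * ∑ x ∈ S, (f x)^2) - (∑ x ∈ S, 2 * f x) * (∑ y ∈ S, f y)
          + S.card * ∑ y ∈ S, (f y)^2 := by
        rw [Finset.sum_add_distrib, Finset.sum_sub_distrib, ← Finset.mul_sum,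
          Finset.sum_const, nsmul_eq_mul, ← Finset.sum_mul]
    _ = 2 * S.card * (∑ x ∈ S, (f x)^2) - 2 * (∑ x ∈ S, f x)^2 := by
        rw [show (∑ x ∈ S, 2 * f x) = 2 * ∑ x ∈ S, f x from (Finset.mul_sum _ _ _).symm]
        ring

lemma ptwise (u v : ℤ) (hu : u = -1 ∨ u = 0 ∨ u = 1) (hv : v = -1 ∨ v = 0 ∨ v = 1) :
    2 * |u - v| = (u - v)^2 + (u^2 - v^2)^2 := by
  rcases hu with h|h|h <;> rcases hv with h'|h'|h' <;> subst h <;> subst h' <;> decide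

lemma coord_bound {α : Type*} (S : Finset α) (f : α → ℤ)
    (hf : ∀ x ∈ S, f x = -1 ∨ f x = 0 ∨ f x = 1) :
    ∑ x ∈ S, ∑ y ∈ S, |f x - f y|
      ≤ 2 * S.card * (∑ x ∈ S, (f x)^2) - (∑ x ∈ S, (f x)^2)^2 := by
  have key : 2 * ∑ x ∈ S, ∑ y ∈ S, |f x - f y|
      = (∑ x ∈ S, ∑ y ∈ S, (f x - f y)^2) + ∑ x ∈ S, ∑ y ∈ S, ((f x)^2 - (f y)^2)^2 := by
    rw [← Finset.sum_add_distrib, Finset.mul_sum]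
    refine Finset.sum_congr rfl fun x hx => ?_
    rw [← Finset.sum_add_distrib, Finset.mul_sum]
    exact Finset.sum_congr rfl fun y hy => ptwise _ _ (hf x hx) (hf y hy)
  have h1 := sum_sub_sq S f
  have h2 := sum_sub_sq S (fun x => (f x)^2)
  have h3 : ∑ x ∈ S, ((f x)^2)^2 = ∑ x ∈ S, (f x)^2 := by
    refine Finset.sum_congr rfl fun x hx => ?_
    rcases hf x hx with h|h|h <;> rw [h] <;> norm_num
  rw [h3] at h2
  have h4 : (0:ℤ) ≤ (∑ x ∈ S, f x)^2 := sq_nonneg _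
  linarith [key, h1, h2]

lemma d1_cast {n : ℕ} (x y : Fin n → ℤ) : (d1 x y : ℤ) = ∑ i, |x i - y i| := by
  unfold d1
  push_cast [Int.natCast_natAbs]
  rfl

lemma sum_d1_swap {n : ℕ} (S : Finset (Fin n → ℤ)) :
    ∑ x ∈ S, ∑ y ∈ S, (d1 x y : ℤ) = ∑ i, ∑ x ∈ S, ∑ y ∈ S, |x i - y i| := by
  simp only [d1_cast]
  have h1 : ∀ x : Fin n → ℤ, ∑ y ∈ S, ∑ i, |x i - y i| = ∑ i, ∑ y ∈ S, |x i - y i| :=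
    fun x => Finset.sum_comm
  simp only [h1]
  exact Finset.sum_comm

lemma sum_d1_lower {n : ℕ} (d : ℕ) (S : Finset (Fin n → ℤ))
    (hd : ∀ x ∈ S, ∀ y ∈ S, x ≠ y → d ≤ d1 x y) :
    (S.card : ℤ) * (S.card - 1) * d ≤ ∑ x ∈ S, ∑ y ∈ S, (d1 x y : ℤ) := by
  have h : ∀ x ∈ S, ((S.card : ℤ) - 1) * d ≤ ∑ y ∈ S, (d1 x y : ℤ) := by
    intro x hx
    have e : ∑ y ∈ S, (d1 x y : ℤ) = ∑ y ∈ S.erase x, (d1 x y : ℤ) := by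
      rw [← Finset.add_sum_erase S _ hx]
      simp [d1]
    rw [e]
    have hcard : ((S.erase x).card : ℤ) = (S.card : ℤ) - 1 := by
      rw [Finset.card_erase_of_mem hx]
      have : 1 ≤ S.card := Finset.card_pos.mpr ⟨x, hx⟩
      push_cast [Nat.cast_sub this]
      ring
    calc ((S.card : ℤ) - 1) * d = ∑ _y ∈ S.erase x, (d : ℤ) := by
          rw [Finset.sum_const, nsmul_eq_mul, hcard]
      _ ≤ ∑ y ∈ S.erase x, (d1 x y : ℤ) := by
          refine Finset.sum_le_sum fun y hy => ?_
          have hyS := Finset.mem_of_mem_erase hy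
          have hne : x ≠ y := fun h => (Finset.ne_of_mem_erase hy) h.symm
          exact_mod_cast hd x hx y hyS hne
  calc (S.card : ℤ) * (S.card - 1) * d = ∑ _x ∈ S, ((S.card : ℤ) - 1) * d := by
        rw [Finset.sum_const, nsmul_eq_mul]; ring
    _ ≤ _ := Finset.sum_le_sum h

lemma column_le (d : ℕ) (C : Finset (Fin d → ℤ)) (hQ : ∀ x ∈ C, isQ x)
    (hd : ∀ x ∈ C, ∀ y ∈ C, x ≠ y → d ≤ d1 x y) (j : Fin d) (v : ℤ) :
    ((C.filter (fun x => x j = v)).card : ℤ) ≤ d := by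
  set S := C.filter (fun x => x j = v) with hS
  set s : ℤ := (S.card : ℤ) with hs
  have hsub : ∀ x ∈ S, x ∈ C := fun x hx => Finset.mem_of_mem_filter x hx
  have hlow := sum_d1_lower d S (fun x hx y hy => hd x (hsub x hx) y (hsub y hy))
  rw [sum_d1_swap] at hlow
  -- upper bound each coordinate
  have hcoord : ∀ i : Fin d, ∑ x ∈ S, ∑ y ∈ S, |x i - y i| ≤ (if i = j then 0 else s^2) := by
    intro i
    by_cases hij : i = j
    · subst hij
      rw [if_pos rfl]
      have : ∀ x ∈ S, ∀ y ∈ S, |x i - y i| = 0 := by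
        intro x hx y hy
        have hx' : x i = v := (Finset.mem_filter.mp hx).2
        have hy' : y i = v := (Finset.mem_filter.mp hy).2
        rw [hx', hy', sub_self, abs_zero]
      refine le_of_eq ?_
      calc ∑ x ∈ S, ∑ y ∈ S, |x i - y i| = ∑ x ∈ S, ∑ y ∈ S, (0:ℤ) := by
            refine Finset.sum_congr rfl fun x hx => Finset.sum_congr rfl fun y hy => this x hx y hy
        _ = 0 := by simp
    · rw [if_neg hij]
      have hb := coord_bound S (fun x => x i) (fun x hx => hQ x (hsub x hx) i)
      have hsq : 2 * s * (∑ x ∈ S, (x i)^2) - (∑ x ∈ S, (x i)^2)^2 ≤ s^2 := by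
        nlinarith [sq_nonneg (s - ∑ x ∈ S, (x i)^2)]
      calc ∑ x ∈ S, ∑ y ∈ S, |x i - y i| ≤ _ := hb
        _ ≤ s^2 := hsq
  have hup : ∑ i, ∑ x ∈ S, ∑ y ∈ S, |x i - y i| ≤ ((d:ℤ) - 1) * s^2 + 0 := by
    calc ∑ i, ∑ x ∈ S, ∑ y ∈ S, |x i - y i| ≤ ∑ i : Fin d, (if i = j then 0 else s^2) :=
          Finset.sum_le_sum fun i _ => hcoord i
      _ = ((d:ℤ) - 1) * s^2 + 0 := by
          have e : (∑ i : Fin d, if i = j then (0:ℤ) else s ^ 2)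
              = ∑ i : Fin d, ((s^2) - if i = j then s^2 else 0) := by
            refine Finset.sum_congr rfl fun i _ => ?_
            split_ifs <;> ring
          rw [e, Finset.sum_sub_distrib, Finset.sum_const,
            Finset.sum_ite_eq' Finset.univ j (fun _ => s^2), if_pos (Finset.mem_univ j)]
          simp [Finset.card_univ]
          ring
  have hkey : s * (s - 1) * d ≤ ((d:ℤ) - 1) * s^2 := by linarith
  have hs0 : 0 ≤ s := Int.natCast_nonneg _
  nlinarith [hkey, hs0]

lemma sigma2_le (d : ℕ) (C : Finset (Fin d → ℤ)) (hQ : ∀ x ∈ C, isQ x)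
    (hd : ∀ x ∈ C, ∀ y ∈ C, x ≠ y → d ≤ d1 x y) (j : Fin d) :
    ∑ x ∈ C, (x j)^2 ≤ 2 * (d:ℤ) := by
  have e : ∑ x ∈ C, (x j)^2
      = ∑ x ∈ C, ((if x j = -1 then (1:ℤ) else 0) + (if x j = 1 then 1 else 0)) := by
    refine Finset.sum_congr rfl fun x hx => ?_
    rcases hQ x hx j with h|h|h <;> rw [h] <;> norm_num
  rw [e, Finset.sum_add_distrib, Finset.sum_boole, Finset.sum_boole]
  have h1 := column_le d C hQ hd j (-1)
  have h2 := column_le d C hQ hd j 1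
  push_cast at h1 h2 ⊢
  linarith

/-- `T(d,d) ≤ 2d + 1/2 + √(2d + 1/4)`: any code in `Q^d` with minimum `d₁`-distance
at least `d` has at most `2d + 1/2 + √(2d + 1/4)` codewords. -/
theorem stmt_17 (d : ℕ) (C : Finset (Fin d → ℤ))
    (hQ : ∀ x ∈ C, isQ x)
    (hd : ∀ x ∈ C, ∀ y ∈ C, x ≠ y → d ≤ d1 x y) :
    (C.card : ℝ) ≤ 2 * d + 1 / 2 + Real.sqrt (2 * d + 1 / 4) := by
  have hsqrt14 : Real.sqrt (1/4) = 1/2 := by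
    rw [show (1/4:ℝ) = (1/2)^2 by norm_num, Real.sqrt_sq (by norm_num)]
  have hsq_ge : (1:ℝ)/2 ≤ Real.sqrt (2*d + 1/4) := by
    rw [← hsqrt14]
    apply Real.sqrt_le_sqrt
    have : (0:ℝ) ≤ (d:ℝ) := Nat.cast_nonneg d
    linarith
  by_cases hM : C.card ≤ 2 * d + 1
  · have h : (C.card : ℝ) ≤ 2*(d:ℝ)+1 := by exact_mod_cast hM
    linarith
  push_neg at hM
  have hd1 : 1 ≤ d := by
    by_contra h
    push_neg at h
    interval_cases d
    have hone : C.card ≤ 1 := Finset.card_le_one.mpr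
      (fun a _ b _ => funext fun i => i.elim0)
    omega
  set M : ℤ := (C.card : ℤ) with hMdef
  have hM' : 2*(d:ℤ)+2 ≤ M := by
    have h : 2*d+2 ≤ C.card := hM
    rw [hMdef]
    exact_mod_cast h
  have hlow := sum_d1_lower d C hd
  rw [sum_d1_swap] at hlow
  have hcoord : ∀ j, ∑ x ∈ C, ∑ y ∈ C, |x j - y j| ≤ 4*(d:ℤ)*(M - d) := by
    intro j
    have hb := coord_bound C (fun x => x j) (fun x hx => hQ x hx j)
    have hσ := sigma2_le d C hQ hd j
    have hσ0 : 0 ≤ ∑ x ∈ C, (x j)^2 := Finset.sum_nonneg fun x _ => sq_nonneg _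
    nlinarith [hb, hσ, hσ0, hM',
      mul_nonneg (sub_nonneg.mpr hσ) (by nlinarith : (0:ℤ) ≤ 2*M - 2*d - ∑ x ∈ C, (x j)^2)]
  have htot : M*(M-1)*d ≤ (4*(d:ℤ)*(M-d)) * d := by
    calc M*(M-1)*d ≤ ∑ j, ∑ x ∈ C, ∑ y ∈ C, |x j - y j| := hlow
      _ ≤ ∑ _j : Fin d, 4*(d:ℤ)*(M-d) := Finset.sum_le_sum fun j _ => hcoord j
      _ = (4*(d:ℤ)*(M-d)) * d := by
          rw [Finset.sum_const, Finset.card_univ, Fintype.card_fin, nsmul_eq_mul]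
          ring
  have hdpos : (0:ℤ) < d := by exact_mod_cast hd1
  have hMM : M*(M-1) ≤ 4*(d:ℤ)*(M-d) := le_of_mul_le_mul_right htot hdpos
  have hR : (C.card:ℝ)*((C.card:ℝ)-1) ≤ 4*(d:ℝ)*((C.card:ℝ)-(d:ℝ)) := by
    have hR' : ((M*(M-1) : ℤ) : ℝ) ≤ ((4*(d:ℤ)*(M-(d:ℤ)) : ℤ) : ℝ) := Int.cast_le.mpr hMM
    rw [hMdef] at hR'
    push_cast at hR'
    convert hR' using 2
  have hquad : ((C.card:ℝ) - (2*(d:ℝ) + 1/2))^2 ≤ 2*(d:ℝ) + 1/4 := by nlinarith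
  have h2 : |(C.card:ℝ) - (2*(d:ℝ)+1/2)| ≤ Real.sqrt (2*(d:ℝ)+1/4) := by
    rw [← Real.sqrt_sq_eq_abs]
    exact Real.sqrt_le_sqrt hquad
  have h3 := le_abs_self ((C.card:ℝ) - (2*(d:ℝ)+1/2))
  linarith
end
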